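/- Let μ ≠ 0, ε = ±1. The metric g on ℝ³ with components g₁₁ = (ε/μ)(e^{−2μx₃} − 1), g₁₂ = 1, g₁₃ = μx₂, g₃₃ = 1 is not Einstein: there is no real constant c and no point-independent validity of ρ_{ij} = c·g_{ij}, where ρ is the Ricci tensor ρ₁₁ = −½εμ(3e^{−2μx₃} − 1), ρ₁₂ = −½μ², ρ₁₃ = −½μ³x₂, ρ₂₂ = ρ₂₃ = 0, ρ₃₃ = −½μ². In fact ρ_{ij} = c·g_{ij} fails at every point even pointwise: there exists no function c(x) making ρ = c·g hold identically on ℝ³. -/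
import Mathlib


/-- A point of `ℝ³`. -/
abbrev Pt := Fin 3 → ℝ

/-- The matrix of the metric `g` at a point `p = (x₁,x₂,x₃)`. -/
noncomputable def gMat (μ ε : ℝ) (p : Pt) : Matrix (Fin 3) (Fin 3) ℝ :=
  ![![(ε/μ) * (Real.exp (-(2*μ*p 2)) - 1), 1, μ * p 1],
    ![1, 0, 0],
    ![μ * p 1, 0, 1]]

/-- The Ricci tensor of `g`. -/
noncomputable def RicciExp (μ ε : ℝ) (p : Pt) : Matrix (Fin 3) (Fin 3) ℝ :=
  ![![-(1/2) * ε * μ * (3 * Real.exp (-(2*μ*p 2)) - 1), -(1/2) * μ^2, -(1/2) * μ^3 * p 1],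
    ![-(1/2) * μ^2, 0, 0],
    ![-(1/2) * μ^3 * p 1, 0, -(1/2) * μ^2]]

/-- The metric `g` is not Einstein: there is no function `c : ℝ³ → ℝ` (in particular, no
constant) with `ρ_{ij} = c·g_{ij}` identically on `ℝ³`. -/
theorem not_einstein (μ ε : ℝ) (hμ : μ ≠ 0) (hε : ε = 1 ∨ ε = -1) :
    ¬ ∃ c : Pt → ℝ, ∀ (p : Pt) (i j : Fin 3), RicciExp μ ε p i j = c p * gMat μ ε p i j := by
  rintro ⟨c, h⟩
  have h00 := h (fun _ => 0) 0 0
  simp [RicciExp, gMat, Real.exp_zero] at h00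
  rcases hε with rfl | rfl <;> simp_all <;> nlinarith [h00]
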